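/- Let Θ be a nonempty type, H0 ⊆ Θ and Θ1 ⊆ Θ nonempty subsets with H0 ⊆ Θ1, and L : ℕ → Θ → ℝ a function. For natural numbers i < j define m_{i,j} = sup_{θ0 ∈ H0, θ1 ∈ Θ1} [Σ_{t=1}^{i} L t θ0 + Σ_{t=i+1}^{j} L t θ1] − sup_{θ0 ∈ H0} Σ_{t=1}^{j} L t θ0, assuming all suprema appearing are finite. Then for any 0 ≤ τ₁ < τ₂ < … < τ_n < T and any fixed 1 ≤ k ≤ n, one has m_{τ_k, T} ≤ Σ_{i=1}^{n−1} m_{τ_i, τ_{i+1}} + m_{τ_n, T}. -/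

import Mathlib

open Finset

/-- The likelihood-ratio statistic for a single change at time `i` using data up to time `j`:
the maximized two-segment log-likelihood (pre-change parameter in `H0`, post-change
parameter in `Θ1`) minus the maximized no-change log-likelihood. -/
noncomputable def changeLRStat {Θ : Type*} (H0 Θ1 : Set Θ) (L : ℕ → Θ → ℝ) (i j : ℕ) : ℝ :=
  sSup {v : ℝ | ∃ θ0 ∈ H0, ∃ θ1 ∈ Θ1,
      v = (∑ t ∈ Finset.Icc 1 i, L t θ0) + ∑ t ∈ Finset.Ioc i j, L t θ1}
    - sSup {v : ℝ | ∃ θ0 ∈ H0, v = ∑ t ∈ Finset.Icc 1 j, L t θ0}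

section Aux

variable {Θ : Type*} (H0 Θ1 : Set Θ) (L : ℕ → Θ → ℝ)

lemma setA_nonempty (hH0 : H0.Nonempty) (hΘ1 : Θ1.Nonempty) (i j : ℕ) :
    {v : ℝ | ∃ θ0 ∈ H0, ∃ θ1 ∈ Θ1,
      v = (∑ t ∈ Finset.Icc 1 i, L t θ0) + ∑ t ∈ Finset.Ioc i j, L t θ1}.Nonempty := by
  obtain ⟨θ0, h0⟩ := hH0
  obtain ⟨θ1, h1⟩ := hΘ1
  exact ⟨_, θ0, h0, θ1, h1, rfl⟩

lemma setB_nonempty (hH0 : H0.Nonempty) (j : ℕ) :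
    {v : ℝ | ∃ θ0 ∈ H0, v = ∑ t ∈ Finset.Icc 1 j, L t θ0}.Nonempty := by
  obtain ⟨θ0, h0⟩ := hH0
  exact ⟨_, θ0, h0, rfl⟩

lemma changeLRStat_nonneg (hH0 : H0.Nonempty) (hΘ1 : Θ1.Nonempty) (hsub : H0 ⊆ Θ1)
    (hbdd2 : ∀ i j : ℕ, BddAbove {v : ℝ | ∃ θ0 ∈ H0, ∃ θ1 ∈ Θ1,
        v = (∑ t ∈ Finset.Icc 1 i, L t θ0) + ∑ t ∈ Finset.Ioc i j, L t θ1})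
    {i j : ℕ} (hij : i ≤ j) : 0 ≤ changeLRStat H0 Θ1 L i j := by
  unfold changeLRStat
  rw [sub_nonneg]
  apply csSup_le (setB_nonempty H0 L hH0 j)
  rintro v ⟨θ0, h0, rfl⟩
  apply le_csSup (hbdd2 i j)
  refine ⟨θ0, h0, θ0, hsub h0, ?_⟩
  have : ∀ m : ℕ, Finset.Icc 1 m = Finset.Ioc 0 m := by
    intro m; ext x; simp [Nat.lt_iff_add_one_le]
  rw [this, this, ← Finset.sum_Ioc_consecutive (fun t => L t θ0) (Nat.zero_le i) hij]

lemma changeLRStat_tri (hH0 : H0.Nonempty) (hΘ1 : Θ1.Nonempty)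
    (hbdd2 : ∀ i j : ℕ, BddAbove {v : ℝ | ∃ θ0 ∈ H0, ∃ θ1 ∈ Θ1,
        v = (∑ t ∈ Finset.Icc 1 i, L t θ0) + ∑ t ∈ Finset.Ioc i j, L t θ1})
    (hbdd1 : ∀ j : ℕ, BddAbove {v : ℝ | ∃ θ0 ∈ H0, v = ∑ t ∈ Finset.Icc 1 j, L t θ0})
    {i j T : ℕ} (hij : i ≤ j) (hjT : j ≤ T) :
    changeLRStat H0 Θ1 L i T ≤ changeLRStat H0 Θ1 L i j + changeLRStat H0 Θ1 L j T := by
  unfold changeLRStat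
  have key : sSup {v : ℝ | ∃ θ0 ∈ H0, ∃ θ1 ∈ Θ1,
      v = (∑ t ∈ Finset.Icc 1 i, L t θ0) + ∑ t ∈ Finset.Ioc i T, L t θ1}
      ≤ sSup {v : ℝ | ∃ θ0 ∈ H0, ∃ θ1 ∈ Θ1,
        v = (∑ t ∈ Finset.Icc 1 i, L t θ0) + ∑ t ∈ Finset.Ioc i j, L t θ1}
      + (sSup {v : ℝ | ∃ θ0 ∈ H0, ∃ θ1 ∈ Θ1,
        v = (∑ t ∈ Finset.Icc 1 j, L t θ0) + ∑ t ∈ Finset.Ioc j T, L t θ1}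
        - sSup {v : ℝ | ∃ θ0 ∈ H0, v = ∑ t ∈ Finset.Icc 1 j, L t θ0}) := by
    apply csSup_le (setA_nonempty H0 Θ1 L hH0 hΘ1 i T)
    rintro v ⟨θ0, h0, θ1, h1, rfl⟩
    have hsplit : ∑ t ∈ Finset.Ioc i T, L t θ1
        = ∑ t ∈ Finset.Ioc i j, L t θ1 + ∑ t ∈ Finset.Ioc j T, L t θ1 :=
      (Finset.sum_Ioc_consecutive (fun t => L t θ1) hij hjT).symm
    have h2 : (∑ t ∈ Finset.Icc 1 i, L t θ0) + ∑ t ∈ Finset.Ioc i j, L t θ1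
        ≤ sSup {v : ℝ | ∃ θ0 ∈ H0, ∃ θ1 ∈ Θ1,
          v = (∑ t ∈ Finset.Icc 1 i, L t θ0) + ∑ t ∈ Finset.Ioc i j, L t θ1} :=
      le_csSup (hbdd2 i j) ⟨θ0, h0, θ1, h1, rfl⟩
    have h3 : sSup {v : ℝ | ∃ θ0 ∈ H0, v = ∑ t ∈ Finset.Icc 1 j, L t θ0}
        + ∑ t ∈ Finset.Ioc j T, L t θ1
        ≤ sSup {v : ℝ | ∃ θ0 ∈ H0, ∃ θ1 ∈ Θ1,
          v = (∑ t ∈ Finset.Icc 1 j, L t θ0) + ∑ t ∈ Finset.Ioc j T, L t θ1} := by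
      have hb : sSup {v : ℝ | ∃ θ0 ∈ H0, v = ∑ t ∈ Finset.Icc 1 j, L t θ0}
          ≤ sSup {v : ℝ | ∃ θ0 ∈ H0, ∃ θ1 ∈ Θ1,
            v = (∑ t ∈ Finset.Icc 1 j, L t θ0) + ∑ t ∈ Finset.Ioc j T, L t θ1}
            - ∑ t ∈ Finset.Ioc j T, L t θ1 := by
        apply csSup_le (setB_nonempty H0 L hH0 j)
        rintro b ⟨θ0', h0', rfl⟩
        rw [le_sub_iff_add_le]
        exact le_csSup (hbdd2 j T) ⟨θ0', h0', θ1, h1, rfl⟩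
      linarith
    rw [hsplit, ← add_assoc]
    linarith
  linarith
end Aux

theorem focus_prop2_pointwise_telescoping
    {Θ : Type*} [Nonempty Θ] (H0 Θ1 : Set Θ)
    (hH0 : H0.Nonempty) (hΘ1 : Θ1.Nonempty) (hsub : H0 ⊆ Θ1)
    (L : ℕ → Θ → ℝ)
    (hbdd2 : ∀ i j : ℕ, BddAbove {v : ℝ | ∃ θ0 ∈ H0, ∃ θ1 ∈ Θ1,
        v = (∑ t ∈ Finset.Icc 1 i, L t θ0) + ∑ t ∈ Finset.Ioc i j, L t θ1})
    (hbdd1 : ∀ j : ℕ, BddAbove {v : ℝ | ∃ θ0 ∈ H0, v = ∑ t ∈ Finset.Icc 1 j, L t θ0})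
    (n T : ℕ) (hn : 1 ≤ n) (τ : ℕ → ℕ)
    (hτmono : ∀ i, 1 ≤ i → i < n → τ i < τ (i + 1))
    (hτT : τ n < T)
    (k : ℕ) (hk1 : 1 ≤ k) (hkn : k ≤ n) :
    changeLRStat H0 Θ1 L (τ k) T
      ≤ (∑ i ∈ Finset.Ico 1 n, changeLRStat H0 Θ1 L (τ i) (τ (i + 1)))
        + changeLRStat H0 Θ1 L (τ n) T := by
  -- monotonicity of τ on [1, n]
  have hmono : ∀ a b, 1 ≤ a → a ≤ b → b ≤ n → τ a ≤ τ b := by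
    intro a b ha hab hbn
    induction b with
    | zero => omega
    | succ m ih =>
      rcases Nat.lt_or_ge a (m+1) with h | h
      · have : τ a ≤ τ m := ih (by omega) (by omega)
        have : τ m < τ (m+1) := hτmono m (by omega) (by omega)
        omega
      · have : a = m + 1 := by omega
        subst this; rfl
  -- τ b ≤ T for 1 ≤ b ≤ n
  have hT : ∀ b, 1 ≤ b → b ≤ n → τ b ≤ T := by
    intro b hb hbn
    have := hmono b n hb hbn le_rfl
    omega
  -- chain inequality by downward induction
  have chain : ∀ d k, 1 ≤ k → k + d = n →
      changeLRStat H0 Θ1 L (τ k) T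
        ≤ (∑ i ∈ Finset.Ico k n, changeLRStat H0 Θ1 L (τ i) (τ (i + 1)))
          + changeLRStat H0 Θ1 L (τ n) T := by
    intro d
    induction d with
    | zero =>
      intro k hk1 hkn
      have : k = n := by omega
      subst this
      simp
    | succ d ih =>
      intro k hk1 hkn
      have hk : k < n := by omega
      have h1 : changeLRStat H0 Θ1 L (τ k) T
          ≤ changeLRStat H0 Θ1 L (τ k) (τ (k+1)) + changeLRStat H0 Θ1 L (τ (k+1)) T :=
        changeLRStat_tri H0 Θ1 L hH0 hΘ1 hbdd2 hbdd1
          (le_of_lt (hτmono k hk1 hk)) (hT (k+1) (by omega) (by omega))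
      have h2 := ih (k+1) (by omega) (by omega)
      have hsum : ∑ i ∈ Finset.Ico k n, changeLRStat H0 Θ1 L (τ i) (τ (i + 1))
          = changeLRStat H0 Θ1 L (τ k) (τ (k+1))
            + ∑ i ∈ Finset.Ico (k+1) n, changeLRStat H0 Θ1 L (τ i) (τ (i + 1)) := by
        exact Finset.sum_eq_sum_Ico_succ_bot hk _
      rw [hsum]
      linarith
  have hmain := chain (n - k) k hk1 (by omega)
  have hsplit : ∑ i ∈ Finset.Ico 1 n, changeLRStat H0 Θ1 L (τ i) (τ (i + 1))
      = (∑ i ∈ Finset.Ico 1 k, changeLRStat H0 Θ1 L (τ i) (τ (i + 1)))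
        + ∑ i ∈ Finset.Ico k n, changeLRStat H0 Θ1 L (τ i) (τ (i + 1)) :=
    (Finset.sum_Ico_consecutive _ hk1 hkn).symm
  have hnng : 0 ≤ ∑ i ∈ Finset.Ico 1 k, changeLRStat H0 Θ1 L (τ i) (τ (i + 1)) := by
    apply Finset.sum_nonneg
    intro i hi
    simp only [Finset.mem_Ico] at hi
    exact changeLRStat_nonneg H0 Θ1 L hH0 hΘ1 hsub hbdd2
      (le_of_lt (hτmono i hi.1 (by omega)))
  rw [hsplit]
  linarith
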